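/- Saturation for large rewards: under assumption sup_θ c'_θ(d) < ∞ and h bounded on [0,D], there exists R̄ such that for all R ≥ R̄, the fixed-budget rebate equilibrium satisfies x_eq_θ(R) = d for all θ and G_eq(R) = D. Analogously, there exists r̄ such that for all r ≥ r̄ the time-of-day equilibrium is x_eq_θ(r) = d for all θ and G_eq(r) = D. -/

import Mathlib

open Set MeasureTheory

/-- saturation for large rewards. With uniformly bounded marginal costs
(`c'_θ(d) ≤ Cb`) and `h` bounded on `[0,D]`, there is a threshold `R̄` such that for
every `R ≥ R̄` the fixed-budget rebate equilibrium is full contribution: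
`x_eq θ R = d` for all `θ` and `G_eq(R) = D`; analogously there is `r̄` for the
time-of-day pricing equilibrium. Equilibria are characterized by the fixed-point/FOC
conditions (hypotheses `hcharR`, `hcharT`). -/
theorem stmt_14 {Θ : Type*} [MeasurableSpace Θ] (μ : Measure Θ) [IsFiniteMeasure μ]
    (d D : ℝ) (hd : 0 < d) (hμ : 0 < (μ Set.univ).toReal)
    (hD : D = d * (μ Set.univ).toReal)
    (h : ℝ → ℝ) (Hb : ℝ) (hhb : ∀ G ∈ Icc (0:ℝ) D, |h G| ≤ Hb)
    (c : Θ → ℝ → ℝ)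
    (hc'mono : ∀ θ, StrictMonoOn (deriv (c θ)) (Icc 0 d))
    (Cb : ℝ) (hCb : ∀ θ, deriv (c θ) d ≤ Cb)
    (GeqR : ℝ → ℝ) (xeqR : Θ → ℝ → ℝ)
    -- any (G, y) satisfying the equilibrium conditions of the fixed-budget rebate
    -- game with parameter R is the (unique) equilibrium (G_eq(R), x_eq(·, R)):
    (hcharR : ∀ R, 0 ≤ R → ∀ G ∈ Ioc (0:ℝ) D, ∀ y : Θ → ℝ,
      (∀ θ, y θ ∈ Icc (0:ℝ) d) → (∫ θ, y θ ∂μ) = G →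
      (∀ θ, (R / G - h G ≤ deriv (c θ) 0 → y θ = 0) ∧
            (deriv (c θ) d ≤ R / G - h G → y θ = d) ∧
            (deriv (c θ) 0 < R / G - h G → R / G - h G < deriv (c θ) d →
              y θ ∈ Ioo (0:ℝ) d ∧ deriv (c θ) (y θ) = R / G - h G)) →
      GeqR R = G ∧ ∀ θ, xeqR θ R = y θ)
    (GeqT : ℝ → ℝ) (xeqT : Θ → ℝ → ℝ)
    -- same characterization for the time-of-day pricing game with reward r:
    (hcharT : ∀ r, 0 ≤ r → ∀ G ∈ Icc (0:ℝ) D, ∀ y : Θ → ℝ,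
      (∀ θ, y θ ∈ Icc (0:ℝ) d) → (∫ θ, y θ ∂μ) = G →
      (∀ θ, (r - h G ≤ deriv (c θ) 0 → y θ = 0) ∧
            (deriv (c θ) d ≤ r - h G → y θ = d) ∧
            (deriv (c θ) 0 < r - h G → r - h G < deriv (c θ) d →
              y θ ∈ Ioo (0:ℝ) d ∧ deriv (c θ) (y θ) = r - h G)) →
      GeqT r = G ∧ ∀ θ, xeqT θ r = y θ) :
    (∃ Rbar : ℝ, ∀ R, Rbar ≤ R → (∀ θ, xeqR θ R = d) ∧ GeqR R = D) ∧
    (∃ rbar : ℝ, ∀ r, rbar ≤ r → (∀ θ, xeqT θ r = d) ∧ GeqT r = D) := by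
  have hDpos : 0 < D := hD ▸ mul_pos hd hμ
  have hhD : |h D| ≤ Hb := hhb D ⟨le_of_lt hDpos, le_refl D⟩
  have hmem : ∀ θ : Θ, (fun _ : Θ => d) θ ∈ Icc (0:ℝ) d := fun θ => ⟨hd.le, le_rfl⟩
  have hint : (∫ _ : Θ, d ∂μ) = D := by
    rw [integral_const, smul_eq_mul, hD, mul_comm]
    rfl
  have hderlt : ∀ θ, deriv (c θ) 0 < deriv (c θ) d := fun θ =>
    hc'mono θ ⟨le_rfl, hd.le⟩ ⟨hd.le, le_rfl⟩ hd
  -- common FOC verification given `deriv (c θ) d ≤ p`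
  have key : ∀ (p : ℝ), (∀ θ, deriv (c θ) d ≤ p) →
      ∀ θ : Θ, (p ≤ deriv (c θ) 0 → (fun _ : Θ => d) θ = 0) ∧
        (deriv (c θ) d ≤ p → (fun _ : Θ => d) θ = d) ∧
        (deriv (c θ) 0 < p → p < deriv (c θ) d →
          (fun _ : Θ => d) θ ∈ Ioo (0:ℝ) d ∧ deriv (c θ) ((fun _ : Θ => d) θ) = p) := by
    intro p hp θ
    refine ⟨fun h1 => absurd (lt_of_le_of_lt (hp θ) (lt_of_le_of_lt h1 (hderlt θ)))
      (lt_irrefl _), fun _ => rfl, fun _ h2 => absurd (lt_of_le_of_lt (hp θ) h2)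
      (lt_irrefl _)⟩
  constructor
  · refine ⟨max 0 (D * (Cb + Hb)), fun R hR => ?_⟩
    have hR0 : 0 ≤ R := le_trans (le_max_left _ _) hR
    have hRd : D * (Cb + Hb) ≤ R := le_trans (le_max_right _ _) hR
    have hp : ∀ θ, deriv (c θ) d ≤ R / D - h D := by
      intro θ
      have h1 : Cb + Hb ≤ R / D := (le_div_iff₀ hDpos).2 (by linarith [hRd])
      have h2 : h D ≤ Hb := le_trans (le_abs_self _) hhD
      linarith [hCb θ]
    have := hcharR R hR0 D ⟨hDpos, le_rfl⟩ (fun _ => d) hmem hint (key _ hp)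
    exact ⟨fun θ => (this.2 θ), this.1⟩
  · refine ⟨max 0 (Cb + Hb), fun r hr => ?_⟩
    have hr0 : 0 ≤ r := le_trans (le_max_left _ _) hr
    have hrd : Cb + Hb ≤ r := le_trans (le_max_right _ _) hr
    have hp : ∀ θ, deriv (c θ) d ≤ r - h D := by
      intro θ
      have h2 : h D ≤ Hb := le_trans (le_abs_self _) hhD
      linarith [hCb θ]
    have := hcharT r hr0 D ⟨hDpos.le, le_rfl⟩ (fun _ => d) hmem hint (key _ hp)
    exact ⟨fun θ => (this.2 θ), this.1⟩
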